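/- arXiv:1011.5003 — 3 statements merged into one kernel-verified Lean document; each statement's English description precedes it below -/
import Mathlib

section
/- Let g be α-Hölder continuous on the unit circle T with α > 1/2. Then the image g(T) has empty interior in the complex plane. -/
open Metric Set
open scoped NNReal

theorem stmt5 (g : ℂ → ℂ) (α C : ℝ≥0) (hα : 1 / 2 < (α : ℝ))
    (hg : HolderOnWith C α g (sphere (0:ℂ) 1)) :
    interior (g '' sphere (0:ℂ) 1) = ∅ := by
  by_contra h
  rw [← Set.not_nonempty_iff_eq_empty, not_not] at h
  have hdim2 : dimH (g '' sphere (0:ℂ) 1) = (2 : ℕ) := by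
    rw [Real.dimH_of_nonempty_interior h, Complex.finrank_real_complex]
  have hαpos : 0 < α := by
    have : (0:ℝ) < α := lt_trans (by norm_num) hα
    exact_mod_cast this
  have hsph : dimH (sphere (0:ℂ) 1) ≤ 1 := by
    have : sphere (0:ℂ) 1 = Set.range (circleMap 0 1) := by
      rw [range_circleMap]; norm_num
    rw [this]
    calc dimH (Set.range (circleMap 0 1)) ≤ dimH (univ : Set ℝ) :=
          (lipschitzWith_circleMap 0 1).dimH_range_le
      _ = 1 := Real.dimH_univ
  have hle : dimH (g '' sphere (0:ℂ) 1) ≤ 1 / (α : ENNReal) := by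
    calc dimH (g '' sphere (0:ℂ) 1) ≤ dimH (sphere (0:ℂ) 1) / α := hg.dimH_image_le hαpos
      _ ≤ 1 / (α : ENNReal) := by
          exact ENNReal.div_le_div_right hsph _
  have hlt : (1 : ENNReal) / α < 2 := by
    rw [ENNReal.div_lt_iff (Or.inl (by exact_mod_cast hαpos.ne')) (Or.inl (by simp))]
    have h2 : (1:ℝ) < 2 * α := by linarith
    have : (1 : ℝ≥0) < 2 * α := by exact_mod_cast h2
    calc (1 : ENNReal) < ((2 * α : ℝ≥0) : ENNReal) := by exact_mod_cast this
      _ = 2 * α := by push_cast; ring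
  rw [hdim2] at hle
  have := lt_of_le_of_lt hle hlt
  norm_num at this
end

section
/- There exists a family of polynomials ℓ_{m,k} in m variables, indexed by integers k > m, such that a holomorphic function g on the unit disk with expansion g(z) = z^m + Σ_{k≥1}(g)_k z^{m+k} satisfies g(z) = z^m/d(z) for some polynomial d of degree at most m with d(0)=1 and d nonvanishing on D, if and only if (g)_k = ℓ_{m,k}((g)_1, ..., (g)_m) for all k > m. -/
open Metric Set

/-- The `n`-th Taylor coefficient of `g` at the origin. -/
noncomputable def coeffAt (g : ℂ → ℂ) (n : ℕ) : ℂ :=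
  iteratedDeriv n g 0 / (n.factorial : ℂ)

namespace Stmt9Aux

open FormalMultilinearSeries Polynomial Filter

def Rep (f : ℂ → ℂ) (u : ℕ → ℂ) : Prop :=
  HasFPowerSeriesAt f (FormalMultilinearSeries.ofScalars ℂ u) 0

lemma ofScalars_coeff (u : ℕ → ℂ) (n : ℕ) :
    (FormalMultilinearSeries.ofScalars ℂ u).coeff n = u n := by
  have h := FormalMultilinearSeries.ofScalars_apply_eq (E := ℂ) u (1:ℂ) n
  have h2 : (FormalMultilinearSeries.ofScalars ℂ u).coeff n
      = FormalMultilinearSeries.ofScalars ℂ u n (fun _ => (1:ℂ)) := rfl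
  rw [h2, h]
  simp

lemma rep_iff {f : ℂ → ℂ} {u : ℕ → ℂ} :
    Rep f u ↔ ∀ᶠ z in nhds (0:ℂ), HasSum (fun n => u n * z ^ n) (f z) := by
  rw [Rep, hasFPowerSeriesAt_iff]
  refine eventually_congr (Eventually.of_forall fun z => ?_)
  have h : (fun n => z ^ n • (FormalMultilinearSeries.ofScalars ℂ u).coeff n)
      = fun n => u n * z ^ n := by
    funext n; simp [ofScalars_coeff, smul_eq_mul, mul_comm]
  rw [h, zero_add]

lemma Rep.unique {f : ℂ → ℂ} {u v : ℕ → ℂ} (h1 : Rep f u) (h2 : Rep f v) : u = v :=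
  FormalMultilinearSeries.ofScalars_series_injective ℂ ℂ
    (h1.eq_formalMultilinearSeries h2)

lemma Rep.congr_fun {f f' : ℂ → ℂ} {u : ℕ → ℂ} (h : Rep f u) (he : f =ᶠ[nhds (0:ℂ)] f') :
    Rep f' u := by
  rw [rep_iff] at h ⊢
  filter_upwards [h, he] with z hz hez
  rwa [hez] at hz

lemma Rep.eventuallyEq {f f' : ℂ → ℂ} {u : ℕ → ℂ} (h1 : Rep f u) (h2 : Rep f' u) :
    f =ᶠ[nhds (0:ℂ)] f' := by
  rw [rep_iff] at h1 h2
  filter_upwards [h1, h2] with z hz1 hz2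
  exact hz1.unique hz2

lemma Rep.const_mul {f : ℂ → ℂ} {u : ℕ → ℂ} (h : Rep f u) (A : ℂ) :
    Rep (fun z => A * f z) (fun n => A * u n) := by
  rw [rep_iff] at h ⊢
  filter_upwards [h] with z hz
  have := hz.mul_left A
  simpa [mul_assoc] using this

lemma Rep.add {f f' : ℂ → ℂ} {u v : ℕ → ℂ} (h : Rep f u) (h' : Rep f' v) :
    Rep (fun z => f z + f' z) (fun n => u n + v n) := by
  rw [rep_iff] at h h' ⊢
  filter_upwards [h, h'] with z hz hz'
  simpa [add_mul] using hz.add hz'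

lemma Rep.zmul {f : ℂ → ℂ} {u : ℕ → ℂ} (h : Rep f u) :
    Rep (fun z => z * f z) (fun n => if n = 0 then 0 else u (n - 1)) := by
  rw [rep_iff] at h ⊢
  filter_upwards [h] with z hz
  have h1 : HasSum (fun n => u n * z ^ (n + 1)) (z * f z) := by
    have := hz.mul_left z
    refine this.congr_fun fun n => ?_
    ring
  have h2 := (hasSum_nat_add_iff (f := fun n =>
      (if n = 0 then (0:ℂ) else u (n - 1)) * z ^ n) 1).mp
    (h1.congr_fun fun n => by simp)
  simpa using h2

lemma rep_pow (m : ℕ) : Rep (fun z => z ^ m) (fun n => if n = m then 1 else 0) := by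
  induction m with
  | zero =>
    rw [rep_iff]
    refine Eventually.of_forall fun z => ?_
    have h0 : (fun n => (if n = 0 then (1:ℂ) else 0) * z ^ n)
        = fun n => if n = 0 then (1:ℂ) else 0 := by
      funext n; by_cases hn : n = 0 <;> simp [hn]
    rw [h0]
    simpa using hasSum_ite_eq 0 (1:ℂ)
  | succ k ih =>
    have h := ih.zmul
    have hf : (fun z => z * z ^ k) = fun z : ℂ => z ^ (k+1) := by
      funext z; ring
    have hu : (fun n => if n = 0 then (0:ℂ) else if n - 1 = k then 1 else 0)
        = fun n => if n = k + 1 then (1:ℂ) else 0 := by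
      funext n
      match n with
      | 0 => simp
      | (j+1) => simp
    rw [hf, hu] at h
    exact h

lemma Rep.polyMul {f : ℂ → ℂ} {u : ℕ → ℂ} (hf : Rep f u) (d : Polynomial ℂ) :
    Rep (fun z => Polynomial.eval z d * f z)
      (fun n => ∑ j ∈ Finset.range (n+1), d.coeff j * u (n - j)) := by
  generalize hN : d.natDegree = N
  induction N using Nat.strong_induction_on generalizing d with
  | _ N ih =>
  rcases Nat.eq_zero_or_pos N with hN0 | hNpos
  · subst hN0
    obtain ⟨a, rfl⟩ := Polynomial.natDegree_eq_zero.mp hN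
    have hfun : (fun z => Polynomial.eval z (Polynomial.C a) * f z)
        = fun z => a * f z := by funext z; simp
    have hcoef : (fun n => ∑ j ∈ Finset.range (n+1),
        (Polynomial.C a).coeff j * u (n - j)) = fun n => a * u n := by
      funext n
      rw [Finset.sum_eq_single 0]
      · simp
      · intro j _ hj; simp [Polynomial.coeff_C, hj]
      · intro hmem; simp at hmem
    rw [hfun, hcoef]
    exact hf.const_mul a
  · have hd0 : d ≠ 0 := by
      intro h; rw [h] at hN; simp at hN; omega
    have hlt : (Polynomial.divX d).natDegree < N := by
      rw [Polynomial.natDegree_divX_eq_natDegree_tsub_one, hN]; omega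
    have hrec := ih _ hlt (Polynomial.divX d) rfl
    have h1 := hrec.zmul
    have h2 := hf.const_mul (d.coeff 0)
    have h3 := h1.add h2
    have hfun : (fun z => (z * (Polynomial.eval z (Polynomial.divX d) * f z))
        + d.coeff 0 * f z) = fun z => Polynomial.eval z d * f z := by
      funext z
      conv_rhs => rw [← Polynomial.divX_mul_X_add d]
      simp only [Polynomial.eval_add, Polynomial.eval_mul, Polynomial.eval_X, Polynomial.eval_C]
      ring
    have hcoef : (fun n => (if n = 0 then 0 else
          ∑ j ∈ Finset.range ((n-1)+1), (Polynomial.divX d).coeff j * u ((n-1) - j))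
        + d.coeff 0 * u n)
        = fun n => ∑ j ∈ Finset.range (n+1), d.coeff j * u (n - j) := by
      funext n
      match n with
      | 0 => simp
      | (t+1) =>
        simp only [Nat.add_sub_cancel, if_neg (Nat.succ_ne_zero t)]
        rw [Finset.sum_range_succ' (fun j => d.coeff j * u (t + 1 - j)) (t+1)]
        simp only [Polynomial.coeff_divX, Nat.succ_sub_succ, Nat.sub_zero]
    rw [← hfun, ← hcoef]
    exact h3

lemma rep_taylor {g : ℂ → ℂ} (hg : DifferentiableOn ℂ g (ball (0:ℂ) 1)) :
    Rep g (fun n => coeffAt g n) := by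
  rw [rep_iff]
  filter_upwards [ball_mem_nhds (0:ℂ) one_pos] with z hz
  have h := Complex.hasSum_taylorSeries_on_ball hg hz
  refine h.congr_fun fun n => ?_
  simp only [coeffAt, smul_eq_mul, sub_zero]
  ring

/-- Variables for the coefficient polynomials. -/
noncomputable def Ap (m : ℕ) (j : ℕ) : MvPolynomial (Fin m) ℂ :=
  if h : j - 1 < m ∧ 1 ≤ j then MvPolynomial.X ⟨j - 1, h.1⟩ else 0

noncomputable def Dp (m : ℕ) : ℕ → MvPolynomial (Fin m) ℂ
  | r =>
    if r = 0 then 1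
    else -∑ i ∈ (Finset.range r).attach, Dp m i.1 * Ap m (r - i.1)
decreasing_by exact Finset.mem_range.mp i.2

noncomputable def Lp (m : ℕ) : ℕ → MvPolynomial (Fin m) ℂ
  | k =>
    if k ≤ m then (if h2 : k - 1 < m then MvPolynomial.X ⟨k - 1, h2⟩ else 0)
    else -∑ i ∈ (Finset.range m).attach, Dp m (i.1 + 1) * Lp m (k - (i.1 + 1))
decreasing_by
  have h1 : i.1 < m := Finset.mem_range.mp i.2
  omega

lemma Dp_zero (m : ℕ) : Dp m 0 = 1 := by
  rw [Dp]; simp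

lemma Dp_succ (m r : ℕ) (hr : r ≠ 0) :
    Dp m r = -∑ i ∈ Finset.range r, Dp m i * Ap m (r - i) := by
  rw [Dp, if_neg hr, Finset.sum_attach (Finset.range r) (fun i => Dp m i * Ap m (r - i))]

lemma Lp_le {m k : ℕ} (h : k ≤ m) (h2 : k - 1 < m) :
    Lp m k = MvPolynomial.X ⟨k - 1, h2⟩ := by
  rw [Lp, if_pos h, dif_pos h2]

lemma Lp_gt {m k : ℕ} (h : m < k) :
    Lp m k = -∑ i ∈ Finset.range m, Dp m (i + 1) * Lp m (k - (i + 1)) := by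
  rw [Lp, if_neg (by omega), Finset.sum_attach (Finset.range m)
    (fun i => Dp m (i + 1) * Lp m (k - (i + 1)))]

lemma cv_shift {d : Polynomial ℂ} {c : ℕ → ℂ} {m : ℕ} (hdeg : d.natDegree ≤ m)
    (hc0 : ∀ j < m, c j = 0) (t : ℕ) (ht : 1 ≤ t) :
    (∑ j ∈ Finset.range (m + t + 1), d.coeff j * c (m + t - j))
      = ∑ j ∈ Finset.range (min t m + 1), d.coeff j * c (m + (t - j)) := by
  have hsub : Finset.range (min t m + 1) ⊆ Finset.range (m + t + 1) := by
    intro x hx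
    simp only [Finset.mem_range] at hx ⊢
    omega
  rw [← Finset.sum_subset hsub ?_]
  · refine Finset.sum_congr rfl fun j hj => ?_
    simp only [Finset.mem_range] at hj
    congr 2
    omega
  · intro j hj hj'
    simp only [Finset.mem_range] at hj hj'
    rcases le_or_gt j m with hjm | hjm
    · have : m + t - j < m := by omega
      rw [hc0 _ this, mul_zero]
    · rw [Polynomial.coeff_eq_zero_of_natDegree_lt (lt_of_le_of_lt hdeg hjm), zero_mul]

end Stmt9Aux

open Stmt9Aux

theorem stmt9 (m : ℕ) (hm : 0 < m) :
    ∃ ℓ : ℕ → MvPolynomial (Fin m) ℂ,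
      ∀ g : ℂ → ℂ, DifferentiableOn ℂ g (ball (0:ℂ) 1) →
        (∀ k < m, iteratedDeriv k g 0 = 0) →
        iteratedDeriv m g 0 = (m.factorial : ℂ) →
        ((∃ d : Polynomial ℂ, d.natDegree ≤ m ∧ d.coeff 0 = 1 ∧
            (∀ z ∈ ball (0:ℂ) 1, d.eval z ≠ 0) ∧
            ∀ z ∈ ball (0:ℂ) 1, g z * d.eval z = z ^ m) ↔
          ∀ k : ℕ, m < k →
            coeffAt g (m + k) =
              MvPolynomial.eval (fun j : Fin m => coeffAt g (m + ((j : ℕ) + 1))) (ℓ k)) := by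
  refine ⟨Lp m, fun g hg hlow hmder => ?_⟩
  set c : ℕ → ℂ := fun n => coeffAt g n with hc
  set v : Fin m → ℂ := fun j => coeffAt g (m + ((j : ℕ) + 1)) with hv
  set b : ℕ → ℂ := fun k => MvPolynomial.eval v (Lp m k) with hb
  set δ : ℕ → ℂ := fun r => MvPolynomial.eval v (Dp m r) with hδ
  have hc0 : ∀ j < m, c j = 0 := by
    intro j hj
    simp [hc, coeffAt, hlow j hj]
  have hcm : c m = 1 := by
    rw [hc]
    simp only [coeffAt, hmder]
    exact div_self (Nat.cast_ne_zero.mpr m.factorial_ne_zero)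
  have hδ0 : δ 0 = 1 := by
    rw [hδ]; simp [Dp_zero]
  -- evaluation of the recursion for Dp
  have hδr : ∀ r, 1 ≤ r → r ≤ m →
      δ r = -∑ i ∈ Finset.range r, δ i * c (m + (r - i)) := by
    intro r h1 h2
    show MvPolynomial.eval v (Dp m r) = _
    rw [Dp_succ m r (by omega), map_neg, map_sum]
    congr 1
    refine Finset.sum_congr rfl fun i hi => ?_
    have hi' : i < r := Finset.mem_range.mp hi
    rw [map_mul]
    congr 1
    have hcond : (r - i) - 1 < m ∧ 1 ≤ r - i := ⟨by omega, by omega⟩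
    rw [Ap, dif_pos hcond, MvPolynomial.eval_X]
    show v _ = c (m + (r - i))
    rw [hv, hc]
    simp only []
    congr 1
    omega
  have hbk_low : ∀ k, 1 ≤ k → k ≤ m → b k = c (m + k) := by
    intro k h1 h2
    show MvPolynomial.eval v (Lp m k) = _
    rw [Lp_le h2 (by omega), MvPolynomial.eval_X]
    show v _ = c (m + k)
    rw [hv, hc]
    simp only []
    congr 1
    omega
  have hbk_high : ∀ k, m < k →
      b k = -∑ i ∈ Finset.range m, δ (i + 1) * b (k - (i + 1)) := by
    intro k hk
    show MvPolynomial.eval v (Lp m k) = _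
    rw [Lp_gt hk, map_neg, map_sum]
    congr 1
    refine Finset.sum_congr rfl fun i _ => ?_
    rw [map_mul]
  constructor
  · -- forward direction
    rintro ⟨d, hdeg, hd0, -, heq⟩
    have hrepg : Rep g c := rep_taylor hg
    have hrepdg := hrepg.polyMul d
    have hcongr : (fun z => Polynomial.eval z d * g z) =ᶠ[nhds (0:ℂ)]
        (fun z : ℂ => z ^ m) := by
      filter_upwards [ball_mem_nhds (0:ℂ) one_pos] with z hz
      rw [mul_comm]
      exact heq z hz
    have huniq := (hrepdg.congr_fun hcongr).unique (rep_pow m)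
    have hconv : ∀ n, (∑ j ∈ Finset.range (n+1), d.coeff j * c (n - j))
        = if n = m then 1 else 0 := fun n => congrFun huniq n
    -- the coefficients of d are determined
    have E1 : ∀ r, 1 ≤ r → r ≤ m → d.coeff r = δ r := by
      intro r
      induction r using Nat.strong_induction_on with
      | _ r ih =>
      intro hr1 hrm
      have h := hconv (m + r)
      rw [if_neg (by omega), cv_shift hdeg hc0 r hr1, min_eq_left hrm,
        Finset.sum_range_succ] at h
      have hlast : c (m + (r - r)) = 1 := by
        rw [Nat.sub_self, Nat.add_zero, hcm]
      rw [hlast, mul_one] at h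
      have h2 := eq_neg_of_add_eq_zero_right h
      rw [h2, hδr r hr1 hrm]
      congr 1
      refine Finset.sum_congr rfl fun j hj => ?_
      have hj' : j < r := Finset.mem_range.mp hj
      congr 1
      rcases Nat.eq_zero_or_pos j with hj0 | hjpos
      · rw [hj0, hd0, hδ0]
      · exact ih j hj' hjpos (by omega)
    have E2 : ∀ k, m < k → c (m + k) = b k := by
      intro k
      induction k using Nat.strong_induction_on with
      | _ k ih =>
      intro hk
      have h := hconv (m + k)
      rw [if_neg (by omega), cv_shift hdeg hc0 k (by omega),
        min_eq_right (by omega : m ≤ k),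
        Finset.sum_range_succ' (fun j => d.coeff j * c (m + (k - j))) m] at h
      rw [hd0, one_mul, Nat.sub_zero] at h
      have h2 := eq_neg_of_add_eq_zero_right h
      rw [h2, hbk_high k hk]
      congr 1
      refine Finset.sum_congr rfl fun j hj => ?_
      have hj' : j < m := Finset.mem_range.mp hj
      have hE1 := E1 (j+1) (by omega) (by omega)
      rw [hE1]
      congr 1
      set t := k - (j + 1) with hT
      have ht1 : 1 ≤ t := by omega
      rcases le_or_gt t m with htm | htm
      · exact (hbk_low t ht1 htm).symm
      · exact ih t (by omega) htm
    intro k hk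
    exact E2 k hk
  · -- backward direction
    intro hA
    have hA' : ∀ k, m < k → c (m + k) = b k := hA
    set d : Polynomial ℂ :=
      ∑ i ∈ Finset.range (m+1), Polynomial.C (δ i) * Polynomial.X ^ i with hd
    have hdcoeff : ∀ j, d.coeff j = if j ≤ m then δ j else 0 := by
      intro j
      rw [hd, Polynomial.finset_sum_coeff]
      simp only [Polynomial.coeff_C_mul, Polynomial.coeff_X_pow, mul_ite, mul_one, mul_zero]
      rw [Finset.sum_ite_eq (Finset.range (m+1)) j (fun i => δ i)]
      simp [Nat.lt_succ_iff]
    have hdeg : d.natDegree ≤ m := by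
      rw [hd]
      refine Polynomial.natDegree_sum_le_of_forall_le _ _ fun i hi => ?_
      refine le_trans (Polynomial.natDegree_C_mul_le _ _) ?_
      rw [Polynomial.natDegree_X_pow]
      exact Nat.lt_succ_iff.mp (Finset.mem_range.mp hi)
    have hd0 : d.coeff 0 = 1 := by
      rw [hdcoeff 0, if_pos (Nat.zero_le m), hδ0]
    -- the convolution identity
    have hconv : ∀ n, (∑ j ∈ Finset.range (n+1), d.coeff j * c (n - j))
        = if n = m then 1 else 0 := by
      intro n
      rcases lt_trichotomy n m with hnm | hnm | hnm
      · rw [if_neg (by omega)]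
        refine Finset.sum_eq_zero fun j hj => ?_
        have : n - j < m := by omega
        rw [hc0 _ this, mul_zero]
      · subst hnm
        rw [if_pos rfl, Finset.sum_eq_single 0]
        · rw [hd0, Nat.sub_zero, hcm, one_mul]
        · intro j hj hj0
          have hj' : j < n + 1 := Finset.mem_range.mp hj
          have : n - j < n := by omega
          rw [hc0 _ this, mul_zero]
        · intro h; exfalso; exact h (Finset.mem_range.mpr (by omega))
      · obtain ⟨t, rfl⟩ : ∃ t, n = m + t := ⟨n - m, by omega⟩
        have ht1 : 1 ≤ t := by omega
        rw [if_neg (by omega), cv_shift hdeg hc0 t ht1]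
        rcases le_or_gt t m with htm | htm
        · rw [min_eq_left htm, Finset.sum_range_succ]
          have hlast : c (m + (t - t)) = 1 := by
            rw [Nat.sub_self, Nat.add_zero, hcm]
          rw [hlast, mul_one, hdcoeff t, if_pos htm, hδr t ht1 htm]
          have hsum : ∑ j ∈ Finset.range t, d.coeff j * c (m + (t - j))
              = ∑ i ∈ Finset.range t, δ i * c (m + (t - i)) := by
            refine Finset.sum_congr rfl fun j hj => ?_
            have hj' : j < t := Finset.mem_range.mp hj
            rw [hdcoeff j, if_pos (by omega)]
          rw [hsum]
          ring
        · rw [min_eq_right (by omega : m ≤ t),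
            Finset.sum_range_succ' (fun j => d.coeff j * c (m + (t - j))) m]
          rw [hd0, one_mul, Nat.sub_zero, hA' t htm, hbk_high t htm]
          have hsum : ∑ j ∈ Finset.range m, d.coeff (j+1) * c (m + (t - (j+1)))
              = ∑ i ∈ Finset.range m, δ (i+1) * b (t - (i+1)) := by
            refine Finset.sum_congr rfl fun j hj => ?_
            have hj' : j < m := Finset.mem_range.mp hj
            rw [hdcoeff (j+1), if_pos (by omega)]
            congr 1
            set s := t - (j + 1) with hS
            have hs1 : 1 ≤ s := by omega
            rcases le_or_gt s m with hsm | hsm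
            · exact (hbk_low s hs1 hsm).symm
            · exact hA' s hsm
          rw [hsum]
          ring
    -- build the function identity
    have hrepg : Rep g c := rep_taylor hg
    have hrepdg := hrepg.polyMul d
    have hcoefeq : (fun n => ∑ j ∈ Finset.range (n+1), d.coeff j * c (n - j))
        = fun n => if n = m then (1:ℂ) else 0 := funext hconv
    rw [hcoefeq] at hrepdg
    have hev := hrepdg.eventuallyEq (rep_pow m)
    have hAn : AnalyticOnNhd ℂ (fun z => g z * Polynomial.eval z d - z ^ m)
        (ball (0:ℂ) 1) := by
      refine DifferentiableOn.analyticOnNhd ?_ isOpen_ball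
      exact (hg.mul (d.differentiable.differentiableOn)).sub
        ((differentiable_pow m).differentiableOn)
    have hev0 : (fun z => g z * Polynomial.eval z d - z ^ m) =ᶠ[nhds (0:ℂ)] 0 := by
      filter_upwards [hev] with z hz
      simp only [Pi.zero_apply]
      rw [sub_eq_zero, mul_comm]
      exact hz
    have hEqOn := hAn.eqOn_zero_of_preconnected_of_eventuallyEq_zero
      (convex_ball (0:ℂ) 1).isPreconnected (mem_ball_self one_pos) hev0
    have heqball : ∀ z ∈ ball (0:ℂ) 1, g z * d.eval z = z ^ m := by
      intro z hz
      have := hEqOn hz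
      simp only [Pi.zero_apply] at this
      exact sub_eq_zero.mp this
    refine ⟨d, hdeg, hd0, ?_, heqball⟩
    intro z hz hz0
    rcases eq_or_ne z 0 with rfl | hzne
    · rw [← Polynomial.coeff_zero_eq_eval_zero, hd0] at hz0
      exact one_ne_zero hz0
    · have h := heqball z hz
      rw [hz0, mul_zero] at h
      exact hzne (pow_eq_zero_iff (by omega : m ≠ 0) |>.mp h.symm)
end

section
/- If g(z) = z^m/d(z) with d a polynomial of degree at most m, d(0)=1, d nonvanishing on the unit disk (so g ∈ B_m), then for every a with |a| < 1/4^m, the transformed function g^a(z) = c z^m (g(z) - a)/((z - z_1)...(z - z_m)) equals g itself, where z_1,...,z_m are the solutions of g(z) = a in D and c is chosen so that z^{-m} g^a(z) → 1 as z → 0. -/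
open Metric Set Filter

open Polynomial

lemma factor_one (s : Set ℂ) (hs : IsOpen s) (w : ℂ) (hw : w ∈ s)
    (f : ℂ → ℂ) (hf : DifferentiableOn ℂ f s) (P : Polynomial ℂ)
    (h : ∀ z ∈ s, f z * (z - w) = P.eval z) :
    ∃ Q : Polynomial ℂ, P = (X - C w) * Q ∧ ∀ z ∈ s, f z = Q.eval z := by
  have hroot : P.IsRoot w := by
    have := (h w hw).symm
    simpa [Polynomial.IsRoot] using this
  obtain ⟨Q, hQ⟩ := (dvd_iff_isRoot.2 hroot)
  refine ⟨Q, hQ, fun z hz => ?_⟩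
  by_cases hzw : z = w
  · subst hzw
    have hfc : ContinuousAt f z := (hf.differentiableAt (hs.mem_nhds hz)).continuousAt
    have h1 : Tendsto f (nhdsWithin z {z}ᶜ) (nhds (f z)) :=
      hfc.continuousWithinAt.tendsto
    have h2 : Tendsto (fun y => Q.eval y) (nhdsWithin z {z}ᶜ) (nhds (Q.eval z)) :=
      (Polynomial.continuous Q).continuousAt.continuousWithinAt.tendsto
    have hev : f =ᶠ[nhdsWithin z {z}ᶜ] fun y => Q.eval y := by
      filter_upwards [self_mem_nhdsWithin, nhdsWithin_le_nhds (hs.mem_nhds hz)]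
        with y hy1 hy2
      have alg := h y hy2
      rw [hQ] at alg
      simp only [Polynomial.eval_mul, Polynomial.eval_sub, Polynomial.eval_X,
        Polynomial.eval_C] at alg
      have hyz : y - z ≠ 0 := sub_ne_zero.2 hy1
      exact mul_right_cancel₀ hyz (by linear_combination alg)
    exact tendsto_nhds_unique (h1.congr' hev) h2
  · have alg := h z hz
    rw [hQ] at alg
    simp only [Polynomial.eval_mul, Polynomial.eval_sub, Polynomial.eval_X,
      Polynomial.eval_C] at alg
    have hzw' : z - w ≠ 0 := sub_ne_zero.2 hzw
    exact mul_right_cancel₀ hzw' (by linear_combination alg)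

lemma factor_many (s : Set ℂ) (hs : IsOpen s) {ι : Type*} (t : Finset ι) (w : ι → ℂ)
    (hw : ∀ j ∈ t, w j ∈ s) :
    ∀ (f : ℂ → ℂ), DifferentiableOn ℂ f s → ∀ (P : Polynomial ℂ),
      (∀ z ∈ s, f z * ∏ j ∈ t, (z - w j) = P.eval z) →
      ∃ Q : Polynomial ℂ, P = (∏ j ∈ t, (X - C (w j))) * Q ∧ ∀ z ∈ s, f z = Q.eval z := by
  classical
  induction t using Finset.induction with
  | empty => intro f hf P h; exact ⟨P, by simp, fun z hz => by simpa using h z hz⟩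
  | @insert j t hj ih =>
    intro f hf P h
    have hwj : w j ∈ s := hw j (Finset.mem_insert_self j t)
    obtain ⟨Q1, hQ1, hQ1'⟩ := factor_one s hs (w j) hwj
      (fun z => f z * ∏ i ∈ t, (z - w i))
      (hf.mul (by
        apply DifferentiableOn.fun_finsetProd
        intro i hi
        exact (differentiableOn_id).sub (differentiableOn_const _))) P
      (fun z hz => by
        have := h z hz
        rw [Finset.prod_insert hj] at this
        linear_combination this)
    obtain ⟨Q, hQ, hQ'⟩ := ih (fun i hi => hw i (Finset.mem_insert_of_mem hi)) f hf Q1 hQ1'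
    refine ⟨Q, ?_, hQ'⟩
    rw [hQ1, hQ, Finset.prod_insert hj, mul_assoc]

/-- `ga` is the transform `g^a` of `g`: there are points `w 1, ..., w m` of the
unit disk which are the solutions of `g = a` counted with multiplicity (i.e.
`g - a = u * ∏ (z - w j)` with `u` holomorphic and nonvanishing), and
`ga(z) = c z^m (g(z) - a) / ∏ (z - w j)` is holomorphic, normalized so that
`z^{-m} ga(z) → 1` as `z → 0`. -/
def IsTransform (m : ℕ) (g : ℂ → ℂ) (a : ℂ) (ga : ℂ → ℂ) : Prop :=
  ∃ (w : Fin m → ℂ) (c : ℂ) (u : ℂ → ℂ),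
    (∀ j, w j ∈ ball (0:ℂ) 1) ∧
    DifferentiableOn ℂ u (ball (0:ℂ) 1) ∧ (∀ z ∈ ball (0:ℂ) 1, u z ≠ 0) ∧
    (∀ z ∈ ball (0:ℂ) 1, g z - a = u z * ∏ j, (z - w j)) ∧
    DifferentiableOn ℂ ga (ball (0:ℂ) 1) ∧
    (∀ z ∈ ball (0:ℂ) 1, ga z * ∏ j, (z - w j) = c * z ^ m * (g z - a)) ∧
    Tendsto (fun z => ga z / z ^ m) (nhdsWithin (0:ℂ) {0}ᶜ) (nhds 1)

theorem stmt11 (m : ℕ) (hm : 0 < m) (g : ℂ → ℂ) (d : Polynomial ℂ)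
    (hdm : d.natDegree ≤ m) (hd0 : d.coeff 0 = 1)
    (hdne : ∀ z ∈ ball (0:ℂ) 1, d.eval z ≠ 0)
    (hgd : ∀ z ∈ ball (0:ℂ) 1, g z * d.eval z = z ^ m)
    (hghol : DifferentiableOn ℂ g (ball (0:ℂ) 1))
    (a : ℂ) (ha : ‖a‖ < 1 / 4 ^ m)
    (ga : ℂ → ℂ) (hga : IsTransform m g a ga) :
    ∀ z ∈ ball (0:ℂ) 1, ga z = g z := by
  classical
  obtain ⟨w, c, u, hwball, huhol, hune, hfac, hgahol, hgaeq, hlim⟩ := hga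
  have hB : IsOpen (ball (0:ℂ) 1) := isOpen_ball
  have h0B : (0:ℂ) ∈ ball (0:ℂ) 1 := mem_ball_self one_pos
  have hd00 : d.eval 0 = 1 := by rw [← Polynomial.coeff_zero_eq_eval_zero]; exact hd0
  -- the polynomial q = ∏ (X - w j)
  set q : Polynomial ℂ := ∏ j : Fin m, (Polynomial.X - Polynomial.C (w j)) with hqdef
  have hqmonic : q.Monic := Polynomial.monic_prod_of_monic _ _
    (fun i _ => Polynomial.monic_X_sub_C _)
  have hq0 : q ≠ 0 := hqmonic.ne_zero
  have hqdeg : q.natDegree = m := by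
    rw [hqdef, Polynomial.natDegree_prod _ _ (fun i _ => Polynomial.X_sub_C_ne_zero _)]
    simp [Polynomial.natDegree_X_sub_C]
  have hqev : ∀ z : ℂ, q.eval z = ∏ j : Fin m, (z - w j) := by
    intro z; rw [hqdef]; simp [Polynomial.eval_prod]
  -- Step 1 : u * d is a polynomial, namely the quotient of X^m - a d by q
  set P : Polynomial ℂ := Polynomial.X ^ m - Polynomial.C a * d with hPdef
  have hPev : ∀ z ∈ ball (0:ℂ) 1,
      (u z * d.eval z) * ∏ j : Fin m, (z - w j) = P.eval z := by
    intro z hz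
    have h1 := hfac z hz
    have h2 := hgd z hz
    simp only [hPdef, Polynomial.eval_sub, Polynomial.eval_pow, Polynomial.eval_X,
      Polynomial.eval_mul, Polynomial.eval_C]
    linear_combination (-(d.eval z)) * h1 + h2
  obtain ⟨Q, hQ, hQ'⟩ := factor_many (ball (0:ℂ) 1) hB Finset.univ w
    (fun j _ => hwball j) (fun z => u z * d.eval z)
    (huhol.mul (d.differentiable.differentiableOn)) P hPev
  have hQne : Q ≠ 0 := by
    intro h0
    have := hQ' 0 h0B
    rw [h0, hd00] at this
    simp at this
    exact hune 0 h0B this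
  have hPne : P ≠ 0 := by rw [hQ]; exact mul_ne_zero hq0 hQne
  have hPdeg : P.natDegree ≤ m := by
    refine le_trans (Polynomial.natDegree_sub_le _ _) ?_
    simp only [Polynomial.natDegree_X_pow, max_le_iff]
    exact ⟨le_refl m, le_trans (Polynomial.natDegree_mul_le)
      (by simp [Polynomial.natDegree_C, hdm])⟩
  have hQdeg : Q.natDegree = 0 := by
    have := Polynomial.natDegree_mul hq0 hQne
    rw [← hQ, hqdeg] at this
    omega
  obtain ⟨k, hk⟩ := Polynomial.natDegree_eq_zero.1 hQdeg
  have hud : ∀ z ∈ ball (0:ℂ) 1, u z * d.eval z = k := by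
    intro z hz
    have := hQ' z hz
    rw [← hk] at this
    simpa using this
  have hk0 : k = u 0 := by
    have := hud 0 h0B
    rw [hd00] at this
    simpa using this.symm
  -- Step 2 : ga z = c * z^m * u z on the ball
  have hgau : ∀ z ∈ ball (0:ℂ) 1, ga z = c * z ^ m * u z := by
    obtain ⟨Q2, hQ2, hQ2'⟩ := factor_many (ball (0:ℂ) 1) hB Finset.univ w
      (fun j _ => hwball j) (fun z => ga z - c * z ^ m * u z)
      (hgahol.sub ((differentiableOn_const c).mul
        ((differentiable_pow m).differentiableOn) |>.mul huhol))
      0 (by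
        intro z hz
        have h1 := hgaeq z hz
        have h2 := hfac z hz
        simp only [Polynomial.eval_zero]
        linear_combination h1 + (c * z ^ m) * h2)
    have hQ20 : Q2 = 0 := by
      rcases mul_eq_zero.1 hQ2.symm with h | h
      · exact absurd h hq0
      · exact h
    intro z hz
    have := hQ2' z hz
    rw [hQ20] at this
    exact sub_eq_zero.1 (by simpa using this)
  -- Step 3 : the normalization gives c * u 0 = 1
  have hcu : c * u 0 = 1 := by
    have hball : ball (0:ℂ) 1 ∈ nhds (0:ℂ) := hB.mem_nhds h0B
    have hev : (fun z => ga z / z ^ m) =ᶠ[nhdsWithin (0:ℂ) {0}ᶜ]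
        (fun z => c * u z) := by
      filter_upwards [self_mem_nhdsWithin, nhdsWithin_le_nhds hball] with z hz1 hz2
      have hz0 : z ≠ 0 := hz1
      rw [hgau z hz2]
      field_simp
    have h1 : Tendsto (fun z => c * u z) (nhdsWithin (0:ℂ) {0}ᶜ) (nhds (c * u 0)) := by
      have : ContinuousAt u 0 := (huhol.differentiableAt hball).continuousAt
      exact ((this.const_smul c).continuousWithinAt.tendsto).congr (fun z => by simp)
    exact (tendsto_nhds_unique (hlim.congr' hev) h1).symm
  -- conclusion
  intro z hz
  have e1 := hgau z hz
  have e2 := hud z hz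
  have e4 := hcu
  have e5 := hgd z hz
  have : ga z * d.eval z = g z * d.eval z := by
    linear_combination d.eval z * e1 + (c * z ^ m) * e2 + (c * z ^ m) * hk0
      + z ^ m * e4 - e5
  exact mul_right_cancel₀ (hdne z hz) this
end
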